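/- Let q be a finite-dimensional Lie algebra over a field of characteristic zero and ξ ∈ q*. Set h = q_ξ and U = (q*)^h. Assume q·ξ + U = q*. Then dim U = dim z_q(h). -/
import Mathlib


/-- The coadjoint action of `x : L` on the dual space: `(coad k x f) y = - f ⁅x, y⁆`. -/
noncomputable def coad (k : Type*) {L : Type*} [Field k] [LieRing L] [LieAlgebra k L]
    (x : L) : Module.Dual k L →ₗ[k] Module.Dual k L where
  toFun f := -(f ∘ₗ (LieAlgebra.ad k L x : L →ₗ[k] L))
  map_add' f g := by ext y; simp [add_comm]
  map_smul' c f := by ext y; simp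

/-- For `ξ` in the dual space, the linear map `z ↦ z · ξ` (coadjoint action on `ξ`);
its range is the tangent space `q·ξ` of the coadjoint orbit and its kernel is the
stabiliser `q_ξ`. -/
noncomputable def coadOrbitMap (k : Type*) {L : Type*} [Field k] [LieRing L] [LieAlgebra k L]
    (ξ : Module.Dual k L) : L →ₗ[k] Module.Dual k L where
  toFun z := coad k z ξ
  map_add' z w := by ext y; simp [coad, add_comm]
  map_smul' c z := by ext y; simp [coad]

/-- Let `q` be a finite-dimensional Lie algebra over a field of
characteristic zero, `ξ ∈ q*`, `h = q_ξ` and `U = (q*)^h`. If `q·ξ + U = q*`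
then `dim U = dim z_q(h)`. -/
theorem dim_fixed_space_eq_dim_centralizer
    {k L : Type*} [Field k] [CharZero k] [LieRing L] [LieAlgebra k L]
    [FiniteDimensional k L] (ξ : Module.Dual k L)
    (hgen : LinearMap.range (coadOrbitMap k ξ) ⊔
        (⨅ z ∈ {z : L | coad k z ξ = 0}, LinearMap.ker (coad k z)) = ⊤) :
    Module.finrank k ↥(⨅ z ∈ {z : L | coad k z ξ = 0}, LinearMap.ker (coad k z)) =
      Module.finrank k ↥(⨅ z ∈ {z : L | coad k z ξ = 0},
        LinearMap.ker (LieAlgebra.ad k L z)) := by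
  classical
  set S : Set L := {z : L | coad k z ξ = 0} with hS
  set A : L →ₗ[k] Module.Dual k L := coadOrbitMap k ξ with hA
  set U : Submodule k (Module.Dual k L) := ⨅ z ∈ S, LinearMap.ker (coad k z) with hU
  have hcoad : ∀ (x : L) (f : Module.Dual k L) (y : L), coad k x f y = -f ⁅x, y⁆ := by
    intro x f y; rfl
  have hAapp : ∀ x y : L, A x y = -ξ ⁅x, y⁆ := by intro x y; rfl
  have hkerA : ∀ z : L, A z = 0 ↔ z ∈ S := fun z => Iff.rfl
  have hUmem : ∀ u, u ∈ U ↔ ∀ z ∈ S, coad k z u = 0 := by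
    intro u; simp [hU, Submodule.mem_iInf, LinearMap.mem_ker]
  -- for z ∈ S, ξ ⁅z, w⁆ = 0
  have hSxi : ∀ z ∈ S, ∀ w : L, ξ ⁅z, w⁆ = 0 := by
    intro z hz w
    have : coad k z ξ w = 0 := by rw [hz]; rfl
    rw [hcoad] at this; exact neg_eq_zero.mp this
  -- key identity
  have hcomm : ∀ x z : L, z ∈ S → coad k z (A x) = -(A ⁅x, z⁆) := by
    intro x z hz
    ext y
    rw [LinearMap.neg_apply, hcoad, hAapp, hAapp, leibniz_lie x z y, map_add]
    have := hSxi z hz ⁅x, y⁆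
    ring_nf
    rw [this]
    ring
  -- vanishing lemma
  have hzero : ∀ x z : L, z ∈ S → ⁅x, z⁆ ∈ S → ⁅x, z⁆ = 0 := by
    intro x z hz hv
    rw [← Module.forall_dual_apply_eq_zero_iff k]
    intro f
    have hf : f ∈ LinearMap.range A ⊔ U := hgen ▸ Submodule.mem_top
    obtain ⟨g, hg, u, hu, rfl⟩ := Submodule.mem_sup.mp hf
    obtain ⟨y, rfl⟩ := hg
    have h1 : A y ⁅x, z⁆ = 0 := by
      rw [hAapp]
      have := hSxi _ hv y
      rw [← lie_skew, map_neg] at this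
      exact this
    have h2 : u ⁅x, z⁆ = 0 := by
      have hu' : coad k z u = 0 := (hUmem u).mp hu z hz
      have : coad k z u x = 0 := by rw [hu']; rfl
      rw [hcoad] at this
      rw [← lie_skew, map_neg]
      exact this
    simp [h1, h2]
  -- the centralizer equals comap A U
  have hZeq : (⨅ z ∈ S, LinearMap.ker (LieAlgebra.ad k L z)) = Submodule.comap A U := by
    ext x
    simp only [Submodule.mem_iInf, LinearMap.mem_ker, Submodule.mem_comap, hUmem,
      LieAlgebra.ad_apply]
    constructor
    · intro hx z hz
      have hxz : ⁅x, z⁆ = 0 := by rw [← lie_skew, hx z hz, neg_zero]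
      rw [hcomm x z hz, hxz, map_zero, neg_zero]
    · intro hx z hz
      have h1 := hx z hz
      rw [hcomm x z hz, neg_eq_zero] at h1
      have := hzero x z hz ((hkerA _).mp h1)
      rw [← lie_skew, this, neg_zero]
  rw [hZeq]
  -- dimension count
  have hkerle : LinearMap.ker A ≤ Submodule.comap A U := by
    intro x hx
    simp only [LinearMap.mem_ker] at hx
    simp [Submodule.mem_comap, hx]
  -- finrank of comap A U
  have h1 : Module.finrank k ↥(Submodule.map A (Submodule.comap A U))
      + Module.finrank k ↥(LinearMap.ker A)
      = Module.finrank k ↥(Submodule.comap A U) := by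
    have := LinearMap.finrank_range_add_finrank_ker (A.domRestrict (Submodule.comap A U))
    rw [LinearMap.range_domRestrict] at this
    have hker : Module.finrank k ↥(LinearMap.ker (A.domRestrict (Submodule.comap A U)))
        = Module.finrank k ↥(LinearMap.ker A) := by
      have he : LinearMap.ker (A.domRestrict (Submodule.comap A U))
          = Submodule.comap (Submodule.comap A U).subtype (LinearMap.ker A) := by
        ext y; simp [LinearMap.mem_ker, LinearMap.domRestrict_apply]
      rw [he]
      exact (Submodule.comapSubtypeEquivOfLe hkerle).finrank_eq
    rw [hker] at this
    exact this
  have h2 : Submodule.map A (Submodule.comap A U) = LinearMap.range A ⊓ U :=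
    Submodule.map_comap_eq A U
  have h3 : Module.finrank k ↥(LinearMap.range A ⊔ U)
      + Module.finrank k ↥(LinearMap.range A ⊓ U)
      = Module.finrank k ↥(LinearMap.range A) + Module.finrank k ↥U :=
    Submodule.finrank_sup_add_finrank_inf_eq _ _
  have h4 : Module.finrank k ↥(LinearMap.range A) + Module.finrank k ↥(LinearMap.ker A)
      = Module.finrank k L := LinearMap.finrank_range_add_finrank_ker A
  have h5 : Module.finrank k ↥(LinearMap.range A ⊔ U) = Module.finrank k L := by
    rw [hgen, finrank_top, Subspace.dual_finrank_eq]
  rw [h2] at h1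
  omega
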